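/- For a finite group G and a left ideal I of the group algebra F_q[G], the set I^{⊥_E} := {b ∈ F_q[G] : (a|b)_E = 0 for all a ∈ I}, where (Σ a_g g | Σ b_g g)_E := Σ_g a_g b_g, is again a left ideal of F_q[G]. -/

import Mathlib

open MonoidAlgebra Finsupp

noncomputable def adj {F : Type*} [Field F] {G : Type*} [Group G]
    (r : MonoidAlgebra F G) : MonoidAlgebra F G :=
  MonoidAlgebra.ofCoeff (Finsupp.mapDomain (fun x => x⁻¹) r.coeff)

lemma adj_apply {F : Type*} [Field F] {G : Type*} [Group G]
    (r : MonoidAlgebra F G) (h : G) : (adj r).coeff h = r.coeff h⁻¹ := by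
  rw [show (h : G) = (h⁻¹)⁻¹ by simp, adj, MonoidAlgebra.coeff_ofCoeff,
    Finsupp.mapDomain_apply (fun x y => by simp)]
  simp

lemma key_eq (F : Type*) [Field F] (G : Type*) [Group G] [Fintype G]
    (r a b : MonoidAlgebra F G) :
    ∑ g : G, a.coeff g * (r * b).coeff g = ∑ g : G, (adj r * a).coeff g * b.coeff g := by
  have hmul : ∀ (f g : MonoidAlgebra F G) (x : G),
      (f * g).coeff x = ∑ h : G, f.coeff h * g.coeff (h⁻¹ * x) := by
    intro f g x
    rw [MonoidAlgebra.coeff_mul_apply_left]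
    exact Finsupp.sum_fintype _ _ (by intro h; simp)
  calc ∑ g : G, a.coeff g * (r * b).coeff g
      = ∑ g : G, ∑ h : G, a.coeff g * (r.coeff h * b.coeff (h⁻¹ * g)) := by
        simp_rw [hmul, Finset.mul_sum]
    _ = ∑ h : G, ∑ g : G, r.coeff h * a.coeff g * b.coeff (h⁻¹ * g) := by
        rw [Finset.sum_comm]
        exact Finset.sum_congr rfl fun h _ => Finset.sum_congr rfl fun g _ => by ring
    _ = ∑ h : G, ∑ k : G, r.coeff h * a.coeff (h * k) * b.coeff k := by
        refine Finset.sum_congr rfl fun h _ => ?_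
        exact Fintype.sum_equiv (Equiv.mulLeft h⁻¹) _ _ (fun k => by simp)
    _ = ∑ k : G, (∑ h : G, (adj r).coeff h * a.coeff (h⁻¹ * k)) * b.coeff k := by
        rw [Finset.sum_comm]
        refine Finset.sum_congr rfl fun k _ => ?_
        rw [Finset.sum_mul]
        exact Fintype.sum_equiv (Equiv.inv G) _ _ (fun h => by simp [adj_apply])
    _ = ∑ g : G, (adj r * a).coeff g * b.coeff g := by simp_rw [hmul]

theorem stmt_12 (F : Type*) [Field F] [Fintype F]
    (G : Type*) [Group G] [Fintype G]
    (I : Ideal (MonoidAlgebra F G)) :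
    ∃ J : Ideal (MonoidAlgebra F G),
      ∀ b : MonoidAlgebra F G,
        b ∈ J ↔ ∀ a ∈ I, ∑ g : G, a.coeff g * b.coeff g = 0 := by
  refine ⟨{ carrier := {b | ∀ a ∈ I, ∑ g : G, a.coeff g * b.coeff g = 0}
            zero_mem' := by
              intro a _
              simp only [MonoidAlgebra.coeff_zero, Finsupp.coe_zero, Pi.zero_apply, mul_zero, Finset.sum_const_zero]
            add_mem' := by
              intro x y hx hy a ha
              calc ∑ g : G, a.coeff g * (x + y).coeff g
                  = ∑ g : G, (a.coeff g * x.coeff g + a.coeff g * y.coeff g) :=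
                    Finset.sum_congr rfl fun g _ => by
                      rw [MonoidAlgebra.coeff_add, Finsupp.add_apply, mul_add]
                _ = 0 := by rw [Finset.sum_add_distrib, hx a ha, hy a ha, add_zero]
            smul_mem' := by
              intro r b hb a ha
              rw [smul_eq_mul, key_eq]
              have : adj r * a ∈ I := by
                simpa [smul_eq_mul] using I.smul_mem (adj r) ha
              exact hb _ this }, fun b => Iff.rfl⟩
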